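/- Let G = (√5+1)/2 and α_* = (−G + 1 + √(G² + 2G + 5))/2. Then for 1 ≤ α ≤ G: min{ 1 + (2−G)(α−2), 1 + (1−α)/α } ≥ 2(√5 − 2), and moreover 1 + min{(2−G)(α−2), (1−α)/α} = 1/α_* − 1 when the minimum is attained appropriately; in particular the constant C_α = min over (x,y) ∈ Ω_α of (1+xy) satisfies C_α ≥ 2(√5−2) > 0 for all α ∈ [(√5−1)/2, G]. -/

import Mathlib

set_option maxHeartbeats 800000


/-- The natural extension domain Ω_α of the α-OCF Gauss map,
Ω_α = I_α×[0,2−G) ∪ (φ_α(α),α)×(2−G,1] ∪ [φ_α(α−2),α)×[1,G),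
with φ_α(α) = 1/α − 1 and φ_α(α−2) = 1/(2−α) − 1. -/
noncomputable def Omega (α : ℝ) : Set (ℝ × ℝ) :=
  let G : ℝ := (Real.sqrt 5 + 1)/2
  (Set.Ico (α-2) α ×ˢ Set.Ico 0 (2-G)) ∪
  (Set.Ioo (1/α - 1) α ×ˢ Set.Ioc (2-G) 1) ∪
  (Set.Ico (1/(2-α) - 1) α ×ˢ Set.Ico 1 G)

/-- With G = (√5+1)/2 and α_* = (−G+1+√(G²+2G+5))/2: for 1 ≤ α ≤ G one has
min{1+(2−G)(α−2), 1+(1−α)/α} ≥ 2(√5−2); at α_* the two branches agree and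
equal 1/α_*; and for every α ∈ [g,G] the constant
C_α = min_{(x,y)∈Ω_α} (1+xy) satisfies C_α ≥ 2(√5−2) > 0, i.e.
1 + xy ≥ 2(√5−2) > 0 for all (x,y) ∈ Ω_α. -/
theorem stmt19 (G αs : ℝ) (hG : G = (Real.sqrt 5 + 1)/2)
    (hαs : αs = (-G + 1 + Real.sqrt (G^2 + 2*G + 5))/2) :
    (∀ α : ℝ, 1 ≤ α → α ≤ G →
      2*(Real.sqrt 5 - 2) ≤ min (1 + (2-G)*(α-2)) (1 + (1-α)/α)) ∧
    (1 + (2-G)*(αs-2) = 1/αs ∧ 1 + (1-αs)/αs = 1/αs) ∧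
    (∀ α : ℝ, (Real.sqrt 5 - 1)/2 ≤ α → α ≤ G →
      ∀ p ∈ Omega α, 2*(Real.sqrt 5 - 2) ≤ 1 + p.1 * p.2) ∧
    (0:ℝ) < 2*(Real.sqrt 5 - 2) := by
  have hs : Real.sqrt 5 ^ 2 = 5 := Real.sq_sqrt (by norm_num)
  have hsnn : (0:ℝ) ≤ Real.sqrt 5 := Real.sqrt_nonneg 5
  have hslb : (2.236:ℝ) ≤ Real.sqrt 5 := by nlinarith
  have hsub : Real.sqrt 5 ≤ (2.2361:ℝ) := by nlinarith
  set s := Real.sqrt 5 with hsdef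
  refine ⟨?_, ⟨?_, ?_⟩, ?_, by nlinarith⟩
  · intro α hα1 hα2
    rw [hG] at hα2
    have hα0 : (0:ℝ) < α := by linarith
    refine le_min ?_ ?_
    · rw [hG]
      nlinarith [mul_nonneg (by nlinarith : (0:ℝ) ≤ 2 - (s+1)/2) (by linarith : (0:ℝ) ≤ (s+1)/2 - α)]
    · have h : 1 + (1-α)/α = 1/α := by field_simp; ring
      rw [h, le_div_iff₀ hα0]
      nlinarith
  · -- branch A equals 1/αs at αs
    have hGpos : (0:ℝ) < G := by rw [hG]; positivity
    set t := Real.sqrt (G^2 + 2*G + 5) with htdef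
    have ht2 : t^2 = G^2 + 2*G + 5 := Real.sq_sqrt (by positivity)
    have htnn : (0:ℝ) ≤ t := Real.sqrt_nonneg _
    have hG1 : (1:ℝ) ≤ G := by rw [hG]; nlinarith
    have htG : G - 1 < t := by nlinarith
    have hαs_pos : (0:ℝ) < αs := by rw [hαs]; linarith
    have hG2 : G^2 = G + 1 := by rw [hG]; linear_combination hs/4
    rw [eq_div_iff (ne_of_gt hαs_pos), hαs]
    linear_combination ((2-G)/4) * ht2 + ((t - G - 1)/2) * hG2
  · have hGpos : (0:ℝ) < G := by rw [hG]; positivity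
    set t := Real.sqrt (G^2 + 2*G + 5) with htdef
    have ht2 : t^2 = G^2 + 2*G + 5 := Real.sq_sqrt (by positivity)
    have htnn : (0:ℝ) ≤ t := Real.sqrt_nonneg _
    have hG1 : (1:ℝ) ≤ G := by rw [hG]; nlinarith
    have htG : G - 1 < t := by nlinarith
    have hαs_pos : (0:ℝ) < αs := by rw [hαs]; linarith
    field_simp
    ring
  · intro α hαl hαu p hp
    rw [hG] at hαu
    have hα0 : (0:ℝ) < α := by linarith
    have h2α : (0:ℝ) < 2 - α := by nlinarith
    obtain ⟨x, y⟩ := p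
    simp only [Omega, Set.mem_union, Set.mem_prod, Set.mem_Ico, Set.mem_Ioo, Set.mem_Ioc] at hp
    simp only
    rcases hp with (⟨⟨hx1, hx2⟩, hy1, hy2⟩ | ⟨⟨hx1, hx2⟩, hy1, hy2⟩) | ⟨⟨hx1, hx2⟩, hy1, hy2⟩
    · -- box 1: x ∈ [α-2, α), y ∈ [0, 2-G)
      rcases le_or_gt 0 x with hx | hx
      · nlinarith [mul_nonneg hx hy1]
      · nlinarith [mul_pos (by linarith : (0:ℝ) < -x) (by linarith : (0:ℝ) < (2 - (s+1)/2) - y),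
          mul_nonneg (by linarith : (0:ℝ) ≤ x - (α-2)) (by nlinarith : (0:ℝ) ≤ 2 - (s+1)/2),
          mul_nonneg (by linarith : (0:ℝ) ≤ α - (s-1)/2) (by nlinarith : (0:ℝ) ≤ 2 - (s+1)/2)]
    · -- box 2: x ∈ (1/α - 1, α), y ∈ (2-G, 1]
      have hxα : 1 < (x+1)*α := by
        have h : 1/α < x + 1 := by linarith
        calc (1:ℝ) = (1/α)*α := by field_simp
        _ < (x+1)*α := by exact mul_lt_mul_of_pos_right h hα0
      clear hx1
      rcases le_or_gt 0 x with hx | hx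
      · nlinarith [mul_nonneg hx (by nlinarith : (0:ℝ) ≤ y)]
      · have hxy : x ≤ x*y := by nlinarith [mul_nonneg (by linarith : (0:ℝ) ≤ -x) (by linarith : (0:ℝ) ≤ 1 - y)]
        have h1x : 2*s - 4 ≤ 1 + x := by
          nlinarith [mul_nonneg (by nlinarith : (0:ℝ) ≤ 2*s - 4) (by linarith : (0:ℝ) ≤ (s+1)/2 - α)]
        linarith
    · -- box 3: x ∈ [1/(2-α) - 1, α), y ∈ [1, G)
      have hx2a : α - 1 ≤ x*(2-α) := by
        have h : 1/(2-α) ≤ x + 1 := by linarith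
        have := (div_le_iff₀ h2α).mp h
        nlinarith
      clear hx1
      rcases le_or_gt 0 x with hx | hx
      · nlinarith [mul_nonneg hx (by linarith : (0:ℝ) ≤ y)]
      · have hxy : x*((s+1)/2) ≤ x*y := by
          nlinarith [mul_nonneg (by linarith : (0:ℝ) ≤ -x) (by linarith : (0:ℝ) ≤ (s+1)/2 - y)]
        have hkey : 2*s - 4 ≤ 1 + x*((s+1)/2) := by
          have h4 : (α - 1)*((s+1)/2) ≤ x*(2-α)*((s+1)/2) :=
            mul_le_mul_of_nonneg_right hx2a (by nlinarith)
          have h5 : (2*s-4)*(2-α) ≤ (2-α) + (α-1)*((s+1)/2) := by nlinarith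
          nlinarith [mul_pos h2α h2α]
        linarith
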